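/- Let L ≥ 1, α_1,…,α_L > 0, ρ > 0 and n > 0. Among all positive real numbers n_1,…,n_L with Σ_{ℓ=1}^L n_ℓ = n, the criterion C_1 = Σ_{ℓ=1}^L α_ℓ n_ℓ^{−ρ/2} is minimized by n_ℓ^* = n · α_ℓ^{2/(ρ+2)} / Σ_{k=1}^L α_k^{2/(ρ+2)}; that is, for every such (n_1,…,n_L), Σ_{ℓ=1}^L α_ℓ n_ℓ^{−ρ/2} ≥ n^{−ρ/2} · (Σ_{k=1}^L α_k^{2/(ρ+2)})^{(ρ+2)/2}, with equality at n_ℓ = n_ℓ^*. -/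

import Mathlib

open Real

theorem optimal_allocation_C1
    (L : ℕ) (hL : 1 ≤ L) (α : Fin L → ℝ) (hα : ∀ ℓ, 0 < α ℓ)
    (ρ : ℝ) (hρ : 0 < ρ) (n : ℝ) (hn : 0 < n) :
    (∀ ns : Fin L → ℝ, (∀ ℓ, 0 < ns ℓ) → ∑ ℓ, ns ℓ = n →
      ∑ ℓ, α ℓ * (ns ℓ) ^ (-(ρ / 2))
        ≥ n ^ (-(ρ / 2)) * (∑ k, (α k) ^ (2 / (ρ + 2))) ^ ((ρ + 2) / 2)) ∧
    (let nstar : Fin L → ℝ :=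
        fun ℓ => n * (α ℓ) ^ (2 / (ρ + 2)) / ∑ k, (α k) ^ (2 / (ρ + 2))
     (∀ ℓ, 0 < nstar ℓ) ∧ (∑ ℓ, nstar ℓ = n) ∧
      ∑ ℓ, α ℓ * (nstar ℓ) ^ (-(ρ / 2))
        = n ^ (-(ρ / 2)) * (∑ k, (α k) ^ (2 / (ρ + 2))) ^ ((ρ + 2) / 2)) := by
  have hρ2 : (0:ℝ) < ρ + 2 := by linarith
  set S : ℝ := ∑ k, (α k) ^ (2 / (ρ + 2)) with hS
  have hSpos : 0 < S := by
    apply Finset.sum_pos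
    · intro i _; exact rpow_pos_of_pos (hα i) _
    · exact Finset.univ_nonempty_iff.mpr ⟨⟨0, hL⟩⟩
  constructor
  · intro ns hns hsum
    set A : ℝ := ∑ ℓ, α ℓ * (ns ℓ) ^ (-(ρ / 2)) with hA
    have hApos : 0 < A := by
      apply Finset.sum_pos
      · intro i _; exact mul_pos (hα i) (rpow_pos_of_pos (hns i) _)
      · exact Finset.univ_nonempty_iff.mpr ⟨⟨0, hL⟩⟩
    have hpq : Real.HolderConjugate ((ρ + 2) / 2) ((ρ + 2) / ρ) := by
      rw [Real.holderConjugate_iff]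
      constructor
      · rw [lt_div_iff₀ (by norm_num : (0:ℝ) < 2)]; linarith
      · field_simp; ring
    -- Hölder
    have hold := Real.inner_le_Lp_mul_Lq_of_nonneg (s := Finset.univ)
      (f := fun k => (α k * (ns k) ^ (-(ρ / 2))) ^ (2 / (ρ + 2)))
      (g := fun k => (ns k) ^ (ρ / (ρ + 2))) hpq
      (fun i _ => (rpow_pos_of_pos (mul_pos (hα i) (rpow_pos_of_pos (hns i) _)) _).le)
      (fun i _ => (rpow_pos_of_pos (hns i) _).le)
    have e1 : ∀ k : Fin L, (α k * (ns k) ^ (-(ρ / 2))) ^ (2 / (ρ + 2)) * (ns k) ^ (ρ / (ρ + 2))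
        = (α k) ^ (2 / (ρ + 2)) := by
      intro k
      rw [Real.mul_rpow (hα k).le (rpow_pos_of_pos (hns k) _).le, mul_assoc,
        ← Real.rpow_mul (hns k).le, ← Real.rpow_add (hns k)]
      have : -(ρ / 2) * (2 / (ρ + 2)) + ρ / (ρ + 2) = 0 := by field_simp; ring
      rw [this, Real.rpow_zero, mul_one]
    have e2 : ∀ k : Fin L, ((α k * (ns k) ^ (-(ρ / 2))) ^ (2 / (ρ + 2))) ^ ((ρ + 2) / 2)
        = α k * (ns k) ^ (-(ρ / 2)) := by
      intro k
      rw [← Real.rpow_mul (mul_pos (hα k) (rpow_pos_of_pos (hns k) _)).le]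
      have : 2 / (ρ + 2) * ((ρ + 2) / 2) = 1 := by field_simp
      rw [this, Real.rpow_one]
    have e3 : ∀ k : Fin L, ((ns k) ^ (ρ / (ρ + 2))) ^ ((ρ + 2) / ρ) = ns k := by
      intro k
      rw [← Real.rpow_mul (hns k).le]
      have : ρ / (ρ + 2) * ((ρ + 2) / ρ) = 1 := by field_simp
      rw [this, Real.rpow_one]
    simp only [e1, e2, e3] at hold
    rw [hsum] at hold
    -- hold : S ≤ A ^ (1 / ((ρ+2)/2)) * n ^ (1 / ((ρ+2)/ρ))
    have h1 : (1 : ℝ) / ((ρ + 2) / 2) = 2 / (ρ + 2) := by field_simp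
    have h2 : (1 : ℝ) / ((ρ + 2) / ρ) = ρ / (ρ + 2) := by field_simp
    rw [h1, h2, ← hS] at hold
    have key := Real.rpow_le_rpow hSpos.le hold (by positivity : (0:ℝ) ≤ (ρ + 2) / 2)
    have e4 : (A ^ (2 / (ρ + 2)) * n ^ (ρ / (ρ + 2))) ^ ((ρ + 2) / 2)
        = A * n ^ (ρ / 2) := by
      rw [Real.mul_rpow (by positivity) (by positivity),
        ← Real.rpow_mul hApos.le, ← Real.rpow_mul hn.le]
      have t1 : 2 / (ρ + 2) * ((ρ + 2) / 2) = 1 := by field_simp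
      have t2 : ρ / (ρ + 2) * ((ρ + 2) / 2) = ρ / 2 := by field_simp
      rw [t1, t2, Real.rpow_one]
    rw [e4] at key
    rw [ge_iff_le]
    calc n ^ (-(ρ / 2)) * S ^ ((ρ + 2) / 2)
        ≤ n ^ (-(ρ / 2)) * (A * n ^ (ρ / 2)) := by
          exact mul_le_mul_of_nonneg_left key (by positivity)
      _ = A * (n ^ (-(ρ / 2)) * n ^ (ρ / 2)) := by ring
      _ = A := by rw [← Real.rpow_add hn]; simp
  · intro nstar
    have hnstar : ∀ ℓ, nstar ℓ = n * (α ℓ) ^ (2 / (ρ + 2)) / S := fun _ => rfl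
    have hpos : ∀ ℓ, 0 < nstar ℓ := by
      intro ℓ; rw [hnstar]; exact div_pos (mul_pos hn (rpow_pos_of_pos (hα ℓ) _)) hSpos
    refine ⟨hpos, ?_, ?_⟩
    · simp only [hnstar]
      rw [← Finset.sum_div, ← Finset.mul_sum, ← hS, mul_div_assoc, div_self hSpos.ne',
        mul_one]
    · have hdiv : 0 < n / S := div_pos hn hSpos
      have e5 : ∀ ℓ : Fin L, α ℓ * (nstar ℓ) ^ (-(ρ / 2))
          = (n / S) ^ (-(ρ / 2)) * (α ℓ) ^ (2 / (ρ + 2)) := by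
        intro ℓ
        rw [hnstar]
        have h0 : n * (α ℓ) ^ (2 / (ρ + 2)) / S = (n / S) * (α ℓ) ^ (2 / (ρ + 2)) := by ring
        rw [h0, Real.mul_rpow hdiv.le (rpow_pos_of_pos (hα ℓ) _).le,
          ← Real.rpow_mul (hα ℓ).le]
        have t3 : 2 / (ρ + 2) * -(ρ / 2) = -(ρ / (ρ + 2)) := by field_simp
        rw [t3, mul_left_comm]
        congr 1
        have hexp : 1 + -(ρ / (ρ + 2)) = 2 / (ρ + 2) := by field_simp; ring
        rw [← Real.rpow_one_add' (hα ℓ).le (by rw [hexp]; exact (div_pos two_pos hρ2).ne'), hexp]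
      calc ∑ ℓ, α ℓ * (nstar ℓ) ^ (-(ρ / 2))
          = ∑ ℓ, (n / S) ^ (-(ρ / 2)) * (α ℓ) ^ (2 / (ρ + 2)) := by
            exact Finset.sum_congr rfl fun ℓ _ => e5 ℓ
        _ = (n / S) ^ (-(ρ / 2)) * S := by rw [← Finset.mul_sum, hS]
        _ = n ^ (-(ρ / 2)) * S ^ ((ρ + 2) / 2) := by
            rw [Real.div_rpow hn.le hSpos.le, div_mul_eq_mul_div, mul_div_assoc]
            congr 1
            rw [Real.rpow_neg hSpos.le, div_eq_mul_inv, inv_inv]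
            have h2 : (ρ + 2) / 2 = 1 + ρ / 2 := by ring
            rw [h2, Real.rpow_add hSpos, Real.rpow_one]
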